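/- Let F: ℝ^{m+r} → ℝ^{m+r} be μ-strongly monotone and ℓ-Lipschitz with 0 < μ ≤ ℓ, let Ω ⊆ ℝ^{m+r} be closed convex, let η satisfy 0 < η < 4μ/ℓ², and let z* ∈ Ω be the unique point satisfying (v-z*)ᵀF(z*) ≥ 0 for all v ∈ Ω. Then along any solution of ż = P_Ω(z - ηF(z)) - z, the function V(z) = (1/2)‖z - z*‖² satisfies (d/dt)V(z(t)) ≤ -η(μ - ηℓ²/4)·‖z(t) - z*‖², and hence ‖z(t) - z*‖ ≤ ‖z(0) - z*‖·e^{-η(μ - ηℓ²/4)t} for all t ≥ 0. -/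

import Mathlib

open scoped RealInnerProductSpace

section Aux

variable {E : Type*} [NormedAddCommGroup E] [InnerProductSpace ℝ E]

lemma my_proj_char {Ω : Set E} (hcv : Convex ℝ Ω) {v p : E} (hp : p ∈ Ω)
    (hmin : ∀ w ∈ Ω, ‖v - p‖ ≤ ‖v - w‖) : ∀ w ∈ Ω, ⟪v - p, w - p⟫ ≤ 0 := by
  have hbdd : BddBelow (Set.range fun w : Ω => ‖v - w‖) :=
    ⟨0, by rintro x ⟨w, rfl⟩; exact norm_nonneg _⟩
  haveI : Nonempty Ω := ⟨⟨p, hp⟩⟩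
  have heq : ‖v - p‖ = ⨅ w : Ω, ‖v - w‖ :=
    le_antisymm (le_ciInf fun w => hmin w w.2) (ciInf_le hbdd ⟨p, hp⟩)
  exact (norm_eq_iInf_iff_real_inner_le_zero hcv hp).mp heq

lemma my_key {Ω : Set E} (hcv : Convex ℝ Ω)
    (P : E → E) (hP : ∀ v, P v ∈ Ω ∧ ∀ w ∈ Ω, ‖v - P v‖ ≤ ‖v - w‖)
    (F : E → E) (μ ℓ η : ℝ) (hμ : 0 < μ) (hμℓ : μ ≤ ℓ) (hη : 0 < η)
    (hmono : ∀ z z', ⟪z - z', F z - F z'⟫ ≥ μ * ‖z - z'‖ ^ 2)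
    (hlip : ∀ z z', ‖F z - F z'‖ ≤ ℓ * ‖z - z'‖)
    (zs : E) (hzs : zs ∈ Ω) (hVI : ∀ v ∈ Ω, ⟪v - zs, F zs⟫ ≥ 0)
    (u : E) :
    ⟪u - zs, P (u - η • F u) - u⟫ ≤ -(η * (μ - η * ℓ ^ 2 / 4)) * ‖u - zs‖ ^ 2 := by
  set y := P (u - η • F u) with hy
  set a := u - zs with ha
  set b := y - u with hb
  have hproj : ⟪(u - η • F u) - y, zs - y⟫ ≤ 0 :=
    my_proj_char hcv (hP _).1 (hP _).2 zs hzs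
  have e1 : (u - η • F u) - y = -b - η • F u := by rw [hb]; abel
  have e2 : zs - y = -(a + b) := by rw [ha, hb]; abel
  rw [e1, e2] at hproj
  have hproj2 : ⟪b, a⟫ + ⟪b, b⟫ + η * ⟪F u, a⟫ + η * ⟪F u, b⟫ ≤ 0 := by
    have : ⟪-b - η • F u, -(a + b)⟫ =
        ⟪b, a⟫ + ⟪b, b⟫ + η * ⟪F u, a⟫ + η * ⟪F u, b⟫ := by
      simp [inner_sub_left, inner_add_right, inner_neg_neg, inner_neg_left, inner_neg_right,
        real_inner_smul_left]
      ring
    linarith [this ▸ hproj]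
  set D := F u - F zs with hD
  have hVIy : ⟪F zs, a⟫ + ⟪F zs, b⟫ ≥ 0 := by
    have := hVI y (hP _).1
    have e3 : y - zs = a + b := by rw [ha, hb]; abel
    rw [e3] at this
    have e4 : ⟪a + b, F zs⟫ = ⟪F zs, a⟫ + ⟪F zs, b⟫ := by
      rw [inner_add_left, real_inner_comm, real_inner_comm b]
    linarith [e4 ▸ this]
  have hmono' : ⟪D, a⟫ ≥ μ * ‖a‖ ^ 2 := by
    have := hmono u zs
    rw [← ha, ← hD] at this
    rw [real_inner_comm]; exact this
  have hDb : ⟪D, b⟫ ≥ -(ℓ * ‖a‖ * ‖b‖) := by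
    have h1 : ⟪D, b⟫ ≥ -(‖D‖ * ‖b‖) := neg_le_of_neg_le (by
      have := abs_real_inner_le_norm D b
      linarith [neg_abs_le (⟪D, b⟫)])
    have h2 : ‖D‖ ≤ ℓ * ‖a‖ := by rw [hD, ha]; exact hlip u zs
    nlinarith [norm_nonneg b]
  have hsplit : ⟪F u, a⟫ = ⟪D, a⟫ + ⟪F zs, a⟫ := by
    rw [hD, inner_sub_left]; ring
  have hsplit2 : ⟪F u, b⟫ = ⟪D, b⟫ + ⟪F zs, b⟫ := by
    rw [hD, inner_sub_left]; ring
  have hbb : ⟪b, b⟫ = ‖b‖ ^ 2 := real_inner_self_eq_norm_sq b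
  have hab : ⟪u - zs, y - u⟫ = ⟪b, a⟫ := by rw [real_inner_comm]
  rw [hab]
  nlinarith [sq_nonneg (‖b‖ - η * ℓ * ‖a‖ / 2), norm_nonneg a, norm_nonneg b,
    mul_le_mul_of_nonneg_left hDb.le (le_of_lt hη)]

end Aux

/-- Exponential convergence of the Lipschitz projected monotone flow
`ż = P_Ω(z - ηF(z)) - z`: with `F` μ-strongly monotone and ℓ-Lipschitz,
`0 < η < 4μ/ℓ²`, and `z*` the variational-inequality solution,
`V(z) = (1/2)‖z - z*‖²` decays at rate `ρ = η(μ - ηℓ²/4)` and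
`‖z(t) - z*‖ ≤ ‖z(0) - z*‖ e^{-ρt}` for all `t ≥ 0`. -/
theorem stmt_18 {m r : ℕ}
    (Ω : Set (EuclideanSpace ℝ (Fin (m + r))))
    (hne : Ω.Nonempty) (hcl : IsClosed Ω) (hcv : Convex ℝ Ω)
    (P : EuclideanSpace ℝ (Fin (m + r)) → EuclideanSpace ℝ (Fin (m + r)))
    -- P is the Euclidean projection onto Ω
    (hP : ∀ v, P v ∈ Ω ∧ ∀ w ∈ Ω, ‖v - P v‖ ≤ ‖v - w‖)
    (F : EuclideanSpace ℝ (Fin (m + r)) → EuclideanSpace ℝ (Fin (m + r)))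
    (μ ℓ η : ℝ) (hμ : 0 < μ) (hμℓ : μ ≤ ℓ) (hη : 0 < η)
    (hη4 : η < 4 * μ / ℓ ^ 2)
    (hmono : ∀ z z', ⟪z - z', F z - F z'⟫ ≥ μ * ‖z - z'‖ ^ 2)
    (hlip : ∀ z z', ‖F z - F z'‖ ≤ ℓ * ‖z - z'‖)
    (zs : EuclideanSpace ℝ (Fin (m + r))) (hzs : zs ∈ Ω)
    (hVI : ∀ v ∈ Ω, ⟪v - zs, F zs⟫ ≥ 0)
    -- z is a solution of the projected dynamics
    (z : ℝ → EuclideanSpace ℝ (Fin (m + r)))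
    (hz : ∀ t, HasDerivAt z (P (z t - η • F (z t)) - z t) t) :
    (∀ t, deriv (fun s => (1 / 2) * ‖z s - zs‖ ^ 2) t ≤
        -(η * (μ - η * ℓ ^ 2 / 4)) * ‖z t - zs‖ ^ 2) ∧
    (∀ t ≥ (0 : ℝ), ‖z t - zs‖ ≤
        ‖z 0 - zs‖ * Real.exp (-(η * (μ - η * ℓ ^ 2 / 4)) * t)) := by
  set ρ := η * (μ - η * ℓ ^ 2 / 4) with hρdef
  have hℓ : 0 < ℓ := lt_of_lt_of_le hμ hμℓ
  have hρ : 0 < ρ := by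
    have h1 : η * ℓ ^ 2 < 4 * μ := (lt_div_iff₀ (pow_pos hℓ 2)).mp hη4
    nlinarith
  have hderiv : ∀ t, HasDerivAt (fun s => (1 / 2 : ℝ) * ‖z s - zs‖ ^ 2)
      (⟪z t - zs, P (z t - η • F (z t)) - z t⟫) t := by
    intro t
    have h1 : HasDerivAt (fun s => z s - zs) (P (z t - η • F (z t)) - z t) t :=
      (hz t).sub_const zs
    have h2 := (HasDerivAt.inner ℝ h1 h1).const_mul (1 / 2 : ℝ)
    have hfun : (fun s => (1 / 2 : ℝ) * ⟪z s - zs, z s - zs⟫) =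
        (fun s => (1 / 2 : ℝ) * ‖z s - zs‖ ^ 2) := by
      funext s; rw [real_inner_self_eq_norm_sq]
    rw [hfun] at h2
    refine h2.congr_deriv ?_
    rw [real_inner_comm (P (z t - η • F (z t)) - z t)]
    ring
  have hkey : ∀ t, ⟪z t - zs, P (z t - η • F (z t)) - z t⟫ ≤ -ρ * ‖z t - zs‖ ^ 2 :=
    fun t => my_key hcv P hP F μ ℓ η hμ hμℓ hη hmono hlip zs hzs hVI (z t)
  refine ⟨fun t => by rw [(hderiv t).deriv]; exact hkey t, fun t ht => ?_⟩
  -- Gronwall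
  set g : ℝ → ℝ := fun s => Real.exp (2 * ρ * s) * ((1 / 2 : ℝ) * ‖z s - zs‖ ^ 2) with hg
  have hgderiv : ∀ s, HasDerivAt g
      (Real.exp (2 * ρ * s) * (2 * ρ) * ((1 / 2 : ℝ) * ‖z s - zs‖ ^ 2) +
        Real.exp (2 * ρ * s) * ⟪z s - zs, P (z s - η • F (z s)) - z s⟫) s := by
    intro s
    have hm := (((hasDerivAt_id s).const_mul (2 * ρ)).exp).mul (hderiv s)
    simp only [id_eq, mul_one] at hm
    exact hm
  have hgmono : Antitone g := by
    apply antitone_of_deriv_nonpos (fun s => (hgderiv s).differentiableAt)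
    intro s
    rw [(hgderiv s).deriv]
    have h1 := hkey s
    have h2 : (0:ℝ) < Real.exp (2 * ρ * s) := Real.exp_pos _
    nlinarith [sq_nonneg ‖z s - zs‖]
  have hle : g t ≤ g 0 := hgmono ht
  have hsq : ‖z t - zs‖ ^ 2 ≤ (‖z 0 - zs‖ * Real.exp (-ρ * t)) ^ 2 := by
    have hexp : (Real.exp (-ρ * t)) ^ 2 = Real.exp (-(2 * ρ * t)) := by
      rw [← Real.exp_nat_mul]; ring_nf
    rw [mul_pow, hexp]
    simp only [hg, Real.exp_zero, mul_comm, one_mul] at hle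
    have h2 : (0:ℝ) < Real.exp (2 * ρ * t) := Real.exp_pos _
    rw [Real.exp_neg]
    have h3 : Real.exp (2 * ρ * t) * ‖z t - zs‖ ^ 2 ≤ ‖z 0 - zs‖ ^ 2 := by
      have he : Real.exp (t * (2 * ρ)) = Real.exp (2 * ρ * t) := by ring_nf
      rw [he] at hle
      simp only [zero_mul, Real.exp_zero, one_mul] at hle
      linarith
    rw [← div_eq_mul_inv, le_div_iff₀ h2]
    nlinarith
  calc ‖z t - zs‖ = Real.sqrt (‖z t - zs‖ ^ 2) := (Real.sqrt_sq (norm_nonneg _)).symm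
    _ ≤ Real.sqrt ((‖z 0 - zs‖ * Real.exp (-ρ * t)) ^ 2) := Real.sqrt_le_sqrt hsq
    _ = ‖z 0 - zs‖ * Real.exp (-ρ * t) := Real.sqrt_sq (by positivity)
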